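/- Let m ≥ 2 be an integer and let β ∈ (0, 1/2) be the smallest positive root of h̄_m(y) = (m-10)y³ - (m-13)y² - 6y + 1. Then for all y ∈ [0, β], (1 - y²/(3y²-3y+1))^(m-1) ≥ 2y/(1-y). -/
import Mathlib


theorem stmt_15 (m : ℕ) (hm : 2 ≤ m) (β : ℝ) (hβ : β ∈ Set.Ioo (0:ℝ) (1/2))
    (hroot : ((m:ℝ) - 10) * β ^ 3 - ((m:ℝ) - 13) * β ^ 2 - 6 * β + 1 = 0)
    (hmin : ∀ y : ℝ, 0 < y →
      ((m:ℝ) - 10) * y ^ 3 - ((m:ℝ) - 13) * y ^ 2 - 6 * y + 1 = 0 → β ≤ y) :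
    ∀ y ∈ Set.Icc (0:ℝ) β,
      (1 - y ^ 2 / (3 * y ^ 2 - 3 * y + 1)) ^ (m - 1) ≥ 2 * y / (1 - y) := by
  obtain ⟨hβ0, hβ2⟩ := hβ
  intro y hy
  obtain ⟨hy0, hyβ⟩ := hy
  have hy2 : y < 1/2 := lt_of_le_of_lt hyβ hβ2
  have hD : (0:ℝ) < 3 * y ^ 2 - 3 * y + 1 := by nlinarith [sq_nonneg (2*y - 1)]
  have h1y : (0:ℝ) < 1 - y := by linarith
  -- nonnegativity of the cubic on [0, β]
  have hpos : 0 ≤ ((m:ℝ) - 10) * y ^ 3 - ((m:ℝ) - 13) * y ^ 2 - 6 * y + 1 := by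
    by_contra hneg
    push_neg at hneg
    set f : ℝ → ℝ := fun t => ((m:ℝ) - 10) * t ^ 3 - ((m:ℝ) - 13) * t ^ 2 - 6 * t + 1
      with hf
    have hcont : ContinuousOn f (Set.Icc 0 y) := by
      apply Continuous.continuousOn; fun_prop
    have h0 : f 0 = 1 := by simp [hf]
    have hivt : (0:ℝ) ∈ Set.Icc (f y) (f 0) := by
      refine ⟨le_of_lt hneg, by simp [h0]⟩
    obtain ⟨z, hz, hfz⟩ := intermediate_value_Icc' hy0 hcont hivt
    have hz0 : 0 < z := by
      rcases lt_or_eq_of_le hz.1 with h | h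
      · exact h
      · exfalso; rw [← h] at hfz; simp [h0] at hfz
    have hβz := hmin z hz0 hfz
    have hyβ' : y = β := le_antisymm hyβ (le_trans hβz hz.2)
    rw [hyβ'] at hneg
    linarith
  -- Bernoulli step
  set t : ℝ := y ^ 2 / (3 * y ^ 2 - 3 * y + 1) with hT
  have ht : t * (3 * y ^ 2 - 3 * y + 1) = y ^ 2 := div_mul_cancel₀ _ (ne_of_gt hD)
  have ht0 : 0 ≤ t := div_nonneg (sq_nonneg y) hD.le
  have ht2 : t ≤ 2 := by
    rw [hT, div_le_iff₀ hD]; nlinarith [sq_nonneg (5*y - 3)]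
  have hbern : 1 - (m - 1 : ℕ) * t ≤ (1 - t) ^ (m - 1) := by
    have := one_add_mul_le_pow (a := -t) (by linarith) (m - 1)
    calc 1 - (m - 1 : ℕ) * t = 1 + (m - 1 : ℕ) * (-t) := by ring
    _ ≤ (1 + -t) ^ (m - 1) := this
    _ = (1 - t) ^ (m - 1) := by ring_nf
  have hcast : ((m - 1 : ℕ) : ℝ) = (m : ℝ) - 1 := by
    have : 1 ≤ m := by omega
    push_cast [Nat.cast_sub this]
    ring
  have hkey : 2 * y / (1 - y) ≤ 1 - (m - 1 : ℕ) * t := by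
    rw [div_le_iff₀ h1y, hcast]
    have key : (1 - ((m:ℝ) - 1) * t) * (1 - y) * (3 * y ^ 2 - 3 * y + 1)
        - 2 * y * (3 * y ^ 2 - 3 * y + 1)
        = ((m:ℝ) - 10) * y ^ 3 - ((m:ℝ) - 13) * y ^ 2 - 6 * y + 1 := by
      linear_combination (-((m:ℝ) - 1) * (1 - y)) * ht
    nlinarith [key, hpos, hD]
  exact le_trans hkey hbern
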